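/- If a global type G is deadlock-free realisable in the synchronous communication model synch, then dual(prod(proj(G))) is a complement of G, i.e. L∃(G) = MSC(synch) \ L∃(dual(prod(proj(G)))). -/

import Mathlib

/-! ## Common definitions: actions, executions, MSCs, communication models,
communicating finite state machines, and global types. -/

/-- Actions: a send `p▷q!m` or a receive `p▷q?m`. -/
inductive Act (P M : Type) : Type where
  | snd (p q : P) (m : M)
  | rcv (p q : P) (m : M)
deriving DecidableEq

namespace Act
variable {P M : Type}

/-- The process executing an action: a send belongs to the sender,
a receive belongs to the receiver. -/
def proc : Act P M → P
  | .snd p _ _ => p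
  | .rcv _ q _ => q

end Act

/-- Raw executions: a word of actions together with a source function on positions. -/
structure Exec (P M : Type) : Type where
  w : List (Act P M)
  src : ℕ → ℕ

namespace Exec
variable {P M : Type}

def act? (e : Exec P M) (i : ℕ) : Option (Act P M) := e.w[i]?

def IsSend (e : Exec P M) (i : ℕ) : Prop := ∃ p q m, e.act? i = some (.snd p q m)

def IsRecv (e : Exec P M) (i : ℕ) : Prop := ∃ p q m, e.act? i = some (.rcv p q m)

/-- Well-formedness of an execution: each receive event `r` labelled `p▷q?m` has a
source send event `src r < r` labelled `p▷q!m`, and `src` is injective on receive events. -/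
def WF (e : Exec P M) : Prop :=
  (∀ i p q m, e.act? i = some (.rcv p q m) →
    e.src i < i ∧ e.act? (e.src i) = some (.snd p q m)) ∧
  (∀ i j, e.IsRecv i → e.IsRecv j → e.src i = e.src j → i = j)

/-- A send event is matched if it is the source of some receive event. -/
def Matched (e : Exec P M) (s : ℕ) : Prop := ∃ r, e.IsRecv r ∧ e.src r = s

def OrphanFree (e : Exec P M) : Prop := ∀ s, e.IsSend s → e.Matched s

/-- Prefix of executions: the word is a prefix and the source functions agree
on the receive events of the shorter one. -/
def IsPrefix (e₁ e₂ : Exec P M) : Prop :=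
  e₁.w <+: e₂.w ∧ ∀ i, e₁.IsRecv i → e₁.src i = e₂.src i

/-- Projection of an execution onto the actions of a process. -/
def proj (e : Exec P M) [DecidableEq P] (p : P) : List (Act P M) :=
  e.w.filter (fun a => decide (a.proc = p))

/-- The MSC event `(process, index within the process)` at a position of the word. -/
def evOf (e : Exec P M) [DecidableEq P] (i : ℕ) : Option (P × ℕ) :=
  (e.act? i).map
    (fun a => (a.proc, ((e.w.take i).filter (fun b => decide (b.proc = a.proc))).length))

/-- The position in the word of the `i`-th event of process `p`. -/
def posOf (e : Exec P M) [DecidableEq P] (ev : P × ℕ) : ℕ :=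
  ((List.range e.w.length).filter
    (fun k => decide ((e.act? k).map Act.proc = some ev.1))).getD ev.2 0

end Exec

/-- Raw MSCs: a word of actions per process, and a source function on events. -/
structure MSC (P M : Type) : Type where
  w : P → List (Act P M)
  src : P × ℕ → P × ℕ

namespace MSC
variable {P M : Type}

def act? (Mm : MSC P M) (ev : P × ℕ) : Option (Act P M) := (Mm.w ev.1)[ev.2]?

def IsSend (Mm : MSC P M) (ev : P × ℕ) : Prop := ∃ p q m, Mm.act? ev = some (.snd p q m)

def IsRecv (Mm : MSC P M) (ev : P × ℕ) : Prop := ∃ p q m, Mm.act? ev = some (.rcv p q m)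

/-- Well-formedness of an MSC. -/
def WF (Mm : MSC P M) : Prop :=
  (∀ p, ∀ a ∈ Mm.w p, a.proc = p) ∧
  (∀ ev p q m, Mm.act? ev = some (.rcv p q m) → Mm.act? (Mm.src ev) = some (.snd p q m)) ∧
  (∀ ev ev', Mm.IsRecv ev → Mm.IsRecv ev' → Mm.src ev = Mm.src ev' → ev = ev')

/-- Basic happens-before steps: process order and message order. -/
inductive hbBase (Mm : MSC P M) : P × ℕ → P × ℕ → Prop where
  | proc (p : P) (i j : ℕ) : i < j → j < (Mm.w p).length → hbBase Mm (p, i) (p, j)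
  | msg (ev : P × ℕ) : Mm.IsRecv ev → hbBase Mm (Mm.src ev) ev

/-- The happens-before relation: least transitive relation containing the basic steps. -/
def hb (Mm : MSC P M) : P × ℕ → P × ℕ → Prop := Relation.TransGen (hbBase Mm)

/-- Prefix of MSCs. -/
def IsPrefix (M₁ M₂ : MSC P M) : Prop :=
  (∀ p, M₁.w p <+: M₂.w p) ∧ ∀ ev, M₁.IsRecv ev → M₁.src ev = M₂.src ev

end MSC

/-- Prefix closure of a set of MSCs. -/
def prefSet {P M : Type} (X : Set (MSC P M)) : Set (MSC P M) :=
  {Mm | ∃ M' ∈ X, Mm.IsPrefix M'}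

/-- The MSC of an execution: project onto each process and lift the source function. -/
def Exec.toMSC {P M : Type} [DecidableEq P] (e : Exec P M) : MSC P M where
  w p := e.w.filter (fun a => decide (a.proc = p))
  src ev := (e.evOf (e.src (e.posOf ev))).getD ev

/-- The linearisations of an MSC, identified with the executions they induce. -/
def lin {P M : Type} [DecidableEq P] (Mm : MSC P M) : Set (Exec P M) :=
  {e | e.WF ∧ e.toMSC = Mm}

/-- The linearisations of an MSC lying in a communication model. -/
def linC {P M : Type} [DecidableEq P] (Com : Set (Exec P M)) (Mm : MSC P M) :
    Set (Exec P M) :=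
  lin Mm ∩ Com

/-- A communication model (a set of executions) is causally closed if whenever an MSC
has a linearisation in the model, all its linearisations are in the model. -/
def CausallyClosed {P M : Type} [DecidableEq P] (Com : Set (Exec P M)) : Prop :=
  ∀ Mm : MSC P M, (linC Com Mm).Nonempty → linC Com Mm = lin Mm

/-- The MSCs linearisable in a communication model. -/
def MSCModel {P M : Type} [DecidableEq P] (Com : Set (Exec P M)) : Set (MSC P M) :=
  {Mm | (linC Com Mm).Nonempty}

/-- The bag communication model: all executions. -/
def bag {P M : Type} : Set (Exec P M) := {e | e.WF}

/-- The synchronous communication model: every send is immediately followed by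
its matching receive. -/
def synch {P M : Type} : Set (Exec P M) :=
  {e | e.WF ∧ ∀ s, e.IsSend s → e.IsRecv (s + 1) ∧ e.src (s + 1) = s}

/-- The peer-to-peer communication model. -/
def p2p {P M : Type} : Set (Exec P M) :=
  {e | e.WF ∧ ∀ s₁ s₂ p q m₁ m₂,
    e.act? s₁ = some (.snd p q m₁) → e.act? s₂ = some (.snd p q m₂) → s₁ < s₂ →
    (¬ e.Matched s₂ ∨
      ∃ r₁ r₂, r₁ < r₂ ∧ e.IsRecv r₁ ∧ e.IsRecv r₂ ∧ e.src r₁ = s₁ ∧ e.src r₂ = s₂)}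

/-- Happens-before between positions of an execution, through its MSC. -/
def Exec.hbM {P M : Type} [DecidableEq P] (e : Exec P M) (i j : ℕ) : Prop :=
  ∃ ev₁ ev₂, e.evOf i = some ev₁ ∧ e.evOf j = some ev₂ ∧ e.toMSC.hb ev₁ ev₂

/-- The causally ordered communication model. -/
def causal {P M : Type} [DecidableEq P] : Set (Exec P M) :=
  {e | e.WF ∧ ∀ s₁ s₂ p₁ p₂ q m₁ m₂,
    e.act? s₁ = some (.snd p₁ q m₁) → e.act? s₂ = some (.snd p₂ q m₂) → e.hbM s₁ s₂ →
    (¬ e.Matched s₂ ∨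
      ∃ r₁ r₂, e.hbM r₁ r₂ ∧ e.IsRecv r₁ ∧ e.IsRecv r₂ ∧ e.src r₁ = s₁ ∧ e.src r₂ = s₂)}

/-- A communicating finite state machine: an NFA with ε-transitions
(over the actions of a process) with finitely many states. -/
structure CFSM (A : Type) : Type 1 where
  State : Type
  fin : Fintype State
  aut : εNFA A State

instance {A : Type} (c : CFSM A) : Fintype c.State := c.fin

/-- The machine obtained by making all states accepting. -/
def CFSM.up {A : Type} (c : CFSM A) : CFSM A :=
  ⟨c.State, c.fin, { c.aut with accept := Set.univ }⟩

/-- Making all states of all machines of a system accepting. -/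
def sysUp {P M : Type} (S : P → CFSM (Act P M)) : P → CFSM (Act P M) :=
  fun p => (S p).up

/-- `Exec(S, Com)`: the executions of a system of CFSMs in a communication model. -/
def ExecSys {P M : Type} [DecidableEq P] (S : P → CFSM (Act P M)) (Com : Set (Exec P M)) :
    Set (Exec P M) :=
  {e | e ∈ Com ∧ ∀ p, e.proj p ∈ (S p).aut.accepts}

/-- `MSC(S, Com)`: the MSCs of the executions of a system of CFSMs. -/
def MSCSys {P M : Type} [DecidableEq P] (S : P → CFSM (Act P M)) (Com : Set (Exec P M)) :
    Set (MSC P M) :=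
  Exec.toMSC '' ExecSys S Com

/-- A system is deadlock-free for `Com` if every execution of the system with all states
accepting is a prefix of an accepting execution of the system. -/
def DeadlockFree {P M : Type} [DecidableEq P] (S : P → CFSM (Act P M))
    (Com : Set (Exec P M)) : Prop :=
  ∀ e ∈ ExecSys (sysUp S) Com, ∃ e' ∈ ExecSys S Com, e.IsPrefix e'

/-- A system is orphan-free for `Com` if all its executions are orphan-free. -/
def SysOrphanFree {P M : Type} [DecidableEq P] (S : P → CFSM (Act P M))
    (Com : Set (Exec P M)) : Prop :=
  ∀ e ∈ ExecSys S Com, e.OrphanFree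

/-- An arrow `p→q:m` with `p ≠ q`. -/
def Arrow (P M : Type) : Type := {x : P × P × M // x.1 ≠ x.2.1}

namespace Arrow
variable {P M : Type}

def sender (a : Arrow P M) : P := a.1.1
def receiver (a : Arrow P M) : P := a.1.2.1
def msg (a : Arrow P M) : M := a.1.2.2
def sendAct (a : Arrow P M) : Act P M := .snd a.sender a.receiver a.msg
def recvAct (a : Arrow P M) : Act P M := .rcv a.sender a.receiver a.msg

/-- Two arrows commute when their pairs of processes are disjoint. -/
def Commutes (a b : Arrow P M) : Prop :=
  a.sender ≠ b.sender ∧ a.sender ≠ b.receiver ∧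
    a.receiver ≠ b.sender ∧ a.receiver ≠ b.receiver

instance [DecidableEq P] [Fintype P] [Fintype M] : Fintype (Arrow P M) :=
  Subtype.fintype _

end Arrow

/-- A global type: a deterministic finite (possibly partial) automaton over arrows. -/
structure GType (P M : Type) : Type 1 where
  State : Type
  fin : Fintype State
  step : State → Arrow P M → Option State
  start : State
  accept : Set State

instance {P M : Type} (G : GType P M) : Fintype G.State := G.fin

namespace GType
variable {P M : Type}

def evalFrom (G : GType P M) (s : Option G.State) (w : List (Arrow P M)) : Option G.State :=
  w.foldl (fun s a => s.bind (fun q => G.step q a)) s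

/-- The word language of a global type. -/
def lang (G : GType P M) : Set (List (Arrow P M)) :=
  {w | ∃ s, G.evalFrom (some G.start) w = some s ∧ s ∈ G.accept}

/-- The arrows labelling the outgoing transitions of a state. -/
def choices (G : GType P M) (s : G.State) : Set (Arrow P M) := {a | (G.step s a).isSome}

/-- Commutation-determinism: no two arrows available at a same state commute. -/
def CommDet (G : GType P M) : Prop :=
  ∀ s : G.State, ∀ a ∈ G.choices s, ∀ b ∈ G.choices s, ¬ a.Commutes b

/-- Sender-driven choice: all arrows available at a same state have the same sender. -/
def SenderDriven (G : GType P M) : Prop :=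
  ∀ s : G.State, ∀ a ∈ G.choices s, ∀ b ∈ G.choices s, a.sender = b.sender

end GType

/-- The synchronous execution coded by a sequence of arrows. -/
def execOfArrows {P M : Type} (w : List (Arrow P M)) : Exec P M where
  w := (w.map (fun a => [a.sendAct, a.recvAct])).flatten
  src := fun i => i - 1

/-- The MSC coded by a sequence of arrows. -/
def mscOfArrows {P M : Type} [DecidableEq P] (w : List (Arrow P M)) : MSC P M :=
  (execOfArrows w).toMSC

/-- The set of MSCs of sequences of arrows (MSCs linearisable in the synchronous model). -/
def MSCsynch (P M : Type) [DecidableEq P] : Set (MSC P M) :=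
  Set.range (mscOfArrows (P := P) (M := M))

/-- The existential MSC language of a global type. -/
def Lexists {P M : Type} [DecidableEq P] (G : GType P M) : Set (MSC P M) :=
  mscOfArrows '' G.lang

/-- The universal MSC language of a global type. -/
def Lforall {P M : Type} [DecidableEq P] (G : GType P M) : Set (MSC P M) :=
  {Mm | (∃ w, mscOfArrows w = Mm) ∧ ∀ w, mscOfArrows w = Mm → w ∈ G.lang}

/-- A global type is commutation-closed when its existential and universal MSC
languages coincide. -/
def GType.CommClosed {P M : Type} [DecidableEq P] (G : GType P M) : Prop :=
  Lexists G = Lforall G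

/-- The relabelling of an arrow for the projection onto process `p`. -/
def projLabel {P M : Type} [DecidableEq P] (p : P) (a : Arrow P M) : Option (Act P M) :=
  if a.sender = p then some a.sendAct
  else if a.receiver = p then some a.recvAct
  else none

/-- The projected system of CFSMs of a global type. -/
def projG {P M : Type} [DecidableEq P] (G : GType P M) : P → CFSM (Act P M) :=
  fun p =>
    ⟨G.State, G.fin,
      { step := fun s oa =>
          {s' | ∃ arr : Arrow P M, G.step s arr = some s' ∧ projLabel p arr = oa},
        start := {G.start},
        accept := G.accept }⟩

/-- `Exec(G, Com)`: the semantics of a global type in a communication model. -/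
def ExecG {P M : Type} [DecidableEq P] (G : GType P M) (Com : Set (Exec P M)) :
    Set (Exec P M) :=
  {e | ∃ Mm ∈ Lexists G, e ∈ linC Com Mm}

/-- Deadlock-free realisability of a global type in a communication model:
(CC) conformance and (DF) deadlock freedom of the projected system. -/
def DFRealisable {P M : Type} [DecidableEq P] (G : GType P M) (Com : Set (Exec P M)) : Prop :=
  ExecSys (projG G) Com = ExecG G Com ∧ DeadlockFree (projG G) Com

/-- The synchronous product of a system of CFSMs: an ε-NFA over arrows. -/
def syncProd {P M : Type} (S : P → CFSM (Act P M)) :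
    εNFA (Arrow P M) (∀ p, (S p).State) where
  step st oa :=
    match oa with
    | some a =>
        {st' | st' a.sender ∈ (S a.sender).aut.step (st a.sender) (some a.sendAct) ∧
               st' a.receiver ∈ (S a.receiver).aut.step (st a.receiver) (some a.recvAct) ∧
               ∀ r, r ≠ a.sender → r ≠ a.receiver → st' r = st r}
    | none =>
        {st' | ∃ p, st' p ∈ (S p).aut.step (st p) none ∧ ∀ r, r ≠ p → st' r = st r}
  start := {st | ∀ p, st p ∈ (S p).aut.start}
  accept := {st | ∀ p, st p ∈ (S p).aut.accept}

/-- `prod(S)`: the powerset determinisation of the synchronous product, a global type. -/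
noncomputable def prodG {P M : Type} [Fintype P] (S : P → CFSM (Act P M)) : GType P M :=
  let A := (syncProd S).toNFA.toDFA
  { State := Set (∀ p, (S p).State)
    fin := by
      haveI : Finite (∀ p, (S p).State) := inferInstance
      exact Fintype.ofFinite _
    step := fun s a => some (A.step s a)
    start := A.start
    accept := A.accept }

/-- The product `G₁ ⊗ G₂` of two global types (language intersection). -/
def prodGT {P M : Type} (G₁ G₂ : GType P M) : GType P M where
  State := G₁.State × G₂.State
  fin := inferInstance
  step s a := (G₁.step s.1 a).bind fun q₁ => (G₂.step s.2 a).map fun q₂ => (q₁, q₂)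
  start := (G₁.start, G₂.start)
  accept := {s | s.1 ∈ G₁.accept ∧ s.2 ∈ G₂.accept}

/-- The dual of a global type: complete it and swap accepting and non-accepting states. -/
def dualG {P M : Type} (G : GType P M) : GType P M where
  State := Option G.State
  fin := inferInstance
  step s a := some (s.bind fun q => G.step q a)
  start := some G.start
  accept := {s | ∀ q, s = some q → q ∉ G.accept}

/-- RSC executions: every receive immediately follows its source send. -/
def RSCexec {P M : Type} : Set (Exec P M) :=
  {e | e.WF ∧ ∀ r, e.IsRecv r → e.src r = r - 1}

/-- The MSCs admitting an RSC linearisation. -/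
def MSCrsc {P M : Type} [DecidableEq P] : Set (MSC P M) :=
  {Mm | ∃ e ∈ RSCexec (P := P) (M := M), e.toMSC = Mm}

/-- A set of MSCs is RegSC if some NFA over actions accepts exactly the RSC executions
whose MSC belongs to the set. -/
def RegSCset {P M : Type} [DecidableEq P] (X : Set (MSC P M)) : Prop :=
  ∃ (σ : Type) (_ : Fintype σ) (A : NFA (Act P M) σ),
    ∀ w : List (Act P M),
      w ∈ A.accepts ↔ ∃ e ∈ RSCexec (P := P) (M := M), e.w = w ∧ e.toMSC ∈ X

/-- A communication model is RegSC if the set of its RSC-linearisable MSCs is RegSC. -/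
def RegSCmodel {P M : Type} [DecidableEq P] (Com : Set (Exec P M)) : Prop :=
  RegSCset (MSCModel Com ∩ MSCrsc)

/-! ### Auxiliary lemmas for statement 11 -/

namespace Stmt11

open Function

variable {P Mg : Type}

/-! #### εNFA generalities -/

theorem εClosure_mono {α σ : Type*} (M : εNFA α σ) {X Y : Set σ} (h : X ⊆ Y) :
    M.εClosure X ⊆ M.εClosure Y := by
  intro s hs
  induction hs with
  | base s hs => exact εNFA.εClosure.base s (h hs)
  | step s t ht _ ih => exact εNFA.εClosure.step s t ht ih

theorem εClosure_εClosure {α σ : Type*} (M : εNFA α σ) (X : Set σ) :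
    M.εClosure (M.εClosure X) = M.εClosure X := by
  refine subset_antisymm ?_ (εNFA.subset_εClosure _ _)
  intro s hs
  induction hs with
  | base s hs => exact hs
  | step s t ht _ ih => exact εNFA.εClosure.step s t ht ih

theorem εClosure_stepSet {α σ : Type*} (M : εNFA α σ) (X : Set σ) (a : α) :
    M.εClosure (M.stepSet X a) = M.stepSet X a := by
  refine subset_antisymm ?_ (εNFA.subset_εClosure _ _)
  intro s hs
  induction hs with
  | base s hs => exact hs
  | step s t ht hs ih =>
    rw [εNFA.mem_stepSet_iff] at ih ⊢
    obtain ⟨x, hx, hcl⟩ := ih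
    exact ⟨x, hx, εNFA.εClosure.step s t ht hcl⟩

/-! #### The word of `execOfArrows` -/

theorem execOfArrows_w_cons (a : Arrow P Mg) (w : List (Arrow P Mg)) :
    (execOfArrows (a :: w)).w = a.sendAct :: a.recvAct :: (execOfArrows w).w := by
  simp [execOfArrows]

theorem execOfArrows_act?_eq (w : List (Arrow P Mg)) (k : ℕ) :
    (execOfArrows w).act? (2 * k) = (w[k]?).map Arrow.sendAct ∧
    (execOfArrows w).act? (2 * k + 1) = (w[k]?).map Arrow.recvAct := by
  induction w generalizing k with
  | nil => simp [execOfArrows, Exec.act?]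
  | cons a w ih =>
    cases k with
    | zero =>
      constructor <;> simp [Exec.act?, execOfArrows_w_cons]
    | succ k =>
      have h2 : 2 * (k + 1) = (2 * k) + 2 := by ring
      have hw : (execOfArrows (a :: w)).w = a.sendAct :: a.recvAct :: (execOfArrows w).w :=
        execOfArrows_w_cons a w
      constructor
      · have := (ih k).1
        simp only [Exec.act?, hw, h2] at *
        simpa using this
      · have := (ih k).2
        simp only [Exec.act?, hw, h2] at *
        simpa using this

theorem execOfArrows_act? (w : List (Arrow P Mg)) (i : ℕ) :
    (execOfArrows w).act? i =
      if i % 2 = 0 then (w[i / 2]?).map Arrow.sendAct else (w[i / 2]?).map Arrow.recvAct := by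
  rcases Nat.even_or_odd i with ⟨k, hk⟩ | ⟨k, hk⟩
  · have hi : i = 2 * k := by omega
    have h0 : i % 2 = 0 := by omega
    have hk2 : i / 2 = k := by omega
    rw [hi, h0, hk2] at *
    simp only [if_pos rfl]
    exact (execOfArrows_act?_eq w k).1
  · have hi : i = 2 * k + 1 := by omega
    have h0 : i % 2 = 1 := by omega
    have hk2 : i / 2 = k := by omega
    rw [hi]
    rw [show (2 * k + 1) % 2 = 1 by omega, show (2 * k + 1) / 2 = k by omega]
    simp only [Nat.one_ne_zero, if_false]
    exact (execOfArrows_act?_eq w k).2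

theorem execOfArrows_src (w : List (Arrow P Mg)) (i : ℕ) :
    (execOfArrows w).src i = i - 1 := rfl

theorem execOfArrows_recv {w : List (Arrow P Mg)} {i : ℕ} {p q : P} {m : Mg}
    (h : (execOfArrows w).act? i = some (.rcv p q m)) :
    i % 2 = 1 ∧ ∃ a, w[i / 2]? = some a ∧ a.sender = p ∧ a.receiver = q ∧ a.msg = m := by
  rw [execOfArrows_act?] at h
  split_ifs at h with h0
  · obtain ⟨a, _, ha⟩ := Option.map_eq_some_iff.mp h
    simp [Arrow.sendAct] at ha
  · obtain ⟨a, hw, ha⟩ := Option.map_eq_some_iff.mp h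
    simp only [Arrow.recvAct, Act.rcv.injEq] at ha
    exact ⟨by omega, a, hw, ha.1, ha.2.1, ha.2.2⟩

theorem execOfArrows_send {w : List (Arrow P Mg)} {i : ℕ} {p q : P} {m : Mg}
    (h : (execOfArrows w).act? i = some (.snd p q m)) :
    i % 2 = 0 ∧ ∃ a, w[i / 2]? = some a ∧ a.sender = p ∧ a.receiver = q ∧ a.msg = m := by
  rw [execOfArrows_act?] at h
  split_ifs at h with h0
  · obtain ⟨a, hw, ha⟩ := Option.map_eq_some_iff.mp h
    simp only [Arrow.sendAct, Act.snd.injEq] at ha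
    exact ⟨h0, a, hw, ha.1, ha.2.1, ha.2.2⟩
  · obtain ⟨a, _, ha⟩ := Option.map_eq_some_iff.mp h
    simp [Arrow.recvAct] at ha

theorem execOfArrows_mem_synch (w : List (Arrow P Mg)) : execOfArrows w ∈ synch := by
  refine ⟨⟨?_, ?_⟩, ?_⟩
  · intro i p q m h
    obtain ⟨h1, a, hw, hs, hr, hm⟩ := execOfArrows_recv h
    refine ⟨by rw [execOfArrows_src]; omega, ?_⟩
    rw [execOfArrows_src, execOfArrows_act?]
    rw [show (i - 1) % 2 = 0 by omega, show (i - 1) / 2 = i / 2 by omega, if_pos rfl, hw]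
    simp [Arrow.sendAct, hs, hr, hm]
  · intro i j hi hj hsrc
    obtain ⟨_, _, _, hi⟩ := hi
    obtain ⟨_, _, _, hj⟩ := hj
    obtain ⟨hi1, -⟩ := execOfArrows_recv hi
    obtain ⟨hj1, -⟩ := execOfArrows_recv hj
    rw [execOfArrows_src, execOfArrows_src] at hsrc
    omega
  · intro s hs
    obtain ⟨p, q, m, hs⟩ := hs
    obtain ⟨h0, a, hw, rfl, rfl, rfl⟩ := execOfArrows_send hs
    constructor
    · refine ⟨a.sender, a.receiver, a.msg, ?_⟩
      rw [execOfArrows_act?, show (s + 1) % 2 = 1 by omega, show (s + 1) / 2 = s / 2 by omega]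
      simp [hw, Arrow.recvAct]
    · rw [execOfArrows_src]; omega

theorem proj_execOfArrows [DecidableEq P] (w : List (Arrow P Mg)) (p : P) :
    (execOfArrows w).proj p = w.filterMap (projLabel p) := by
  induction w with
  | nil => simp [Exec.proj, execOfArrows]
  | cons a w ih =>
    have hne : a.sender ≠ a.receiver := a.2
    show ((execOfArrows (a :: w)).w.filter _) = _
    rw [execOfArrows_w_cons]
    by_cases hs : a.sender = p
    · have hr : a.receiver ≠ p := fun h => hne (hs.trans h.symm)
      simp only [List.filter_cons, List.filterMap_cons, projLabel, if_pos hs]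
      simp only [Arrow.sendAct, Arrow.recvAct, Act.proc, hs, hr, decide_true, decide_false,
        if_true, if_false]
      exact congrArg (List.cons _) ih
    · by_cases hr : a.receiver = p
      · simp only [List.filter_cons, List.filterMap_cons, projLabel, if_neg hs, if_pos hr]
        simp only [Arrow.sendAct, Arrow.recvAct, Act.proc, hs, hr, decide_true, decide_false,
          if_true, if_false]
        exact congrArg (List.cons _) ih
      · simp only [List.filter_cons, List.filterMap_cons, projLabel, if_neg hs, if_neg hr]
        simp only [Arrow.sendAct, Arrow.recvAct, Act.proc, hs, hr, decide_false, if_false]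
        exact ih

/-! #### The synchronous product -/

section Prod

variable [DecidableEq P] (S : P → CFSM (Act P Mg))

/-- Product of component sets of states. -/
def PS (T : ∀ p, Set (S p).State) : Set (∀ p, (S p).State) := {st | ∀ p, st p ∈ T p}

theorem mem_PS {T : ∀ p, Set (S p).State} {st : ∀ p, (S p).State} :
    st ∈ PS S T ↔ ∀ p, st p ∈ T p := Iff.rfl

theorem εClosure_PS_subset (T : ∀ p, Set (S p).State) :
    (syncProd S).εClosure (PS S T) ⊆ PS S fun p => (S p).aut.εClosure (T p) := by
  intro st h
  induction h with
  | base s hs => exact fun p => εNFA.εClosure.base _ (hs p)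
  | step s t ht _ ih =>
    obtain ⟨p0, hp0, hrest⟩ := ht
    intro p
    by_cases hp : p = p0
    · subst hp; exact εNFA.εClosure.step _ _ hp0 (ih p)
    · rw [hrest p hp]; exact ih p

theorem lift_closure (p : P) {U : Set (S p).State} {t : (S p).State}
    (ht : t ∈ (S p).aut.εClosure U) (X : Set (∀ q, (S q).State)) (st : ∀ q, (S q).State)
    (h0 : ∀ u ∈ U, Function.update st p u ∈ (syncProd S).εClosure X) :
    Function.update st p t ∈ (syncProd S).εClosure X := by
  induction ht with
  | base u hu => exact h0 u hu
  | step s t' ht' _ ih =>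
    refine εNFA.εClosure.step (Function.update st p s) _ ⟨p, ?_, ?_⟩ ih
    · simpa using ht'
    · intro r hr
      simp [Function.update_of_ne hr]

theorem εClosure_PS_supset [Fintype P] (T : ∀ p, Set (S p).State) :
    (PS S fun p => (S p).aut.εClosure (T p)) ⊆ (syncProd S).εClosure (PS S T) := by
  suffices H : ∀ F : Finset P, ∀ st : ∀ p, (S p).State,
      (∀ p ∈ F, st p ∈ (S p).aut.εClosure (T p)) → (∀ p ∉ F, st p ∈ T p) →
      st ∈ (syncProd S).εClosure (PS S T) by
    intro st h
    exact H Finset.univ st (fun p _ => h p) (fun p hp => absurd (Finset.mem_univ p) hp)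
  intro F
  induction F using Finset.induction_on with
  | empty =>
    intro st _ h2
    exact εNFA.εClosure.base _ fun p => h2 p (by simp)
  | @insert q F hq ih =>
    intro st h1 h2
    have hst : st = Function.update st q (st q) := (Function.update_eq_self q st).symm
    rw [hst]
    refine lift_closure S q (h1 q (Finset.mem_insert_self q F)) _ st ?_
    intro u hu
    apply ih
    · intro p hp
      have hpq : p ≠ q := fun e => hq (e ▸ hp)
      rw [Function.update_of_ne hpq]
      exact h1 p (Finset.mem_insert_of_mem hp)
    · intro p hp
      by_cases hpq : p = q
      · subst hpq; simpa using hu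
      · rw [Function.update_of_ne hpq]
        exact h2 p (by simp [hpq, hp])

theorem εClosure_PS [Fintype P] (T : ∀ p, Set (S p).State) :
    (syncProd S).εClosure (PS S T) = PS S fun p => (S p).aut.εClosure (T p) :=
  subset_antisymm (εClosure_PS_subset S T) (εClosure_PS_supset S T)

theorem step_PS (st : ∀ p, (S p).State) (a : Arrow P Mg) :
    (syncProd S).step st (some a) =
      PS S fun p =>
        if a.sender = p then (S p).aut.step (st p) (some a.sendAct)
        else if a.receiver = p then (S p).aut.step (st p) (some a.recvAct)
        else {st p} := by
  have hne : a.sender ≠ a.receiver := a.2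
  ext y
  constructor
  · rintro ⟨h1, h2, h3⟩ p
    beta_reduce
    by_cases hs : a.sender = p
    · rw [if_pos hs]; subst hs; exact h1
    · by_cases hr : a.receiver = p
      · rw [if_neg hs, if_pos hr]; subst hr; exact h2
      · rw [if_neg hs, if_neg hr]
        exact h3 p (fun e => hs e.symm) (fun e => hr e.symm)
  · intro h
    refine ⟨?_, ?_, ?_⟩
    · have := h a.sender; beta_reduce at this; rwa [if_pos rfl] at this
    · have := h a.receiver; beta_reduce at this
      rwa [if_neg hne, if_pos rfl] at this
    · intro r hr1 hr2
      have := h r; beta_reduce at this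
      rw [if_neg (fun e => hr1 e.symm), if_neg (fun e => hr2 e.symm)] at this
      exact this

/-- The per-process successor sets after reading arrow `a`. -/
def stepT (T : ∀ p, Set (S p).State) (a : Arrow P Mg) : ∀ p, Set (S p).State :=
  fun p =>
    if a.sender = p then (S p).aut.stepSet (T p) a.sendAct
    else if a.receiver = p then (S p).aut.stepSet (T p) a.recvAct
    else T p

theorem stepSet_PS [Fintype P] (T : ∀ p, Set (S p).State)
    (hT : ∀ p, (S p).aut.εClosure (T p) = T p) (a : Arrow P Mg) :
    (syncProd S).stepSet (PS S T) a = PS S (stepT S T a) := by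
  have hne : a.sender ≠ a.receiver := a.2
  ext st'
  rw [εNFA.mem_stepSet_iff]
  constructor
  · rintro ⟨st, hst, hcl⟩
    rw [step_PS, εClosure_PS] at hcl
    intro p
    have hp := hcl p
    beta_reduce at hp
    unfold stepT
    by_cases hs : a.sender = p
    · rw [if_pos hs] at hp ⊢
      rw [εNFA.mem_stepSet_iff]
      exact ⟨st p, hst p, hp⟩
    · by_cases hr : a.receiver = p
      · rw [if_neg hs, if_pos hr] at hp ⊢
        rw [εNFA.mem_stepSet_iff]
        exact ⟨st p, hst p, hp⟩
      · rw [if_neg hs, if_neg hr] at hp ⊢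
        rw [← hT p]
        exact εClosure_mono _ (by intro x hx; rw [Set.mem_singleton_iff] at hx; rw [hx]; exact hst p) hp
  · intro h
    have hs := h a.sender
    have hr := h a.receiver
    unfold stepT at hs hr
    rw [if_pos rfl, εNFA.mem_stepSet_iff] at hs
    rw [if_neg hne, if_pos rfl, εNFA.mem_stepSet_iff] at hr
    obtain ⟨xs, hxs, hcs⟩ := hs
    obtain ⟨xr, hxr, hcr⟩ := hr
    set st0 := Function.update (Function.update st' a.sender xs) a.receiver xr with hst0
    have hst0s : st0 a.sender = xs := by
      rw [hst0, Function.update_of_ne hne, Function.update_self]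
    have hst0r : st0 a.receiver = xr := by rw [hst0, Function.update_self]
    have hst0o : ∀ p, a.sender ≠ p → a.receiver ≠ p → st0 p = st' p := by
      intro p h1 h2
      rw [hst0, Function.update_of_ne (fun e => h2 e.symm),
        Function.update_of_ne (fun e => h1 e.symm)]
    refine ⟨st0, ?_, ?_⟩
    · intro p
      by_cases h1 : a.sender = p
      · subst h1; rw [hst0s]; exact hxs
      · by_cases h2 : a.receiver = p
        · subst h2; rw [hst0r]; exact hxr
        · rw [hst0o p h1 h2]
          have := h p
          unfold stepT at this
          rwa [if_neg h1, if_neg h2] at this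
    · rw [step_PS, εClosure_PS]
      intro p
      beta_reduce
      by_cases h1 : a.sender = p
      · rw [if_pos h1]; subst h1; rw [hst0s]; exact hcs
      · by_cases h2 : a.receiver = p
        · rw [if_neg h1, if_pos h2]; subst h2; rw [hst0r]; exact hcr
        · rw [if_neg h1, if_neg h2, hst0o p h1 h2]
          exact εNFA.εClosure.base _ rfl

theorem foldl_stepSet_PS [Fintype P] (w : List (Arrow P Mg)) :
    ∀ T : ∀ p, Set (S p).State, (∀ p, (S p).aut.εClosure (T p) = T p) →
    List.foldl (syncProd S).stepSet (PS S T) w =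
      PS S fun p => List.foldl (S p).aut.stepSet (T p) (w.filterMap (projLabel p)) := by
  induction w with
  | nil => intro T _; rfl
  | cons a w ih =>
    intro T hT
    have hne : a.sender ≠ a.receiver := a.2
    rw [List.foldl_cons, stepSet_PS S T hT a, ih (stepT S T a) ?hcl]
    case hcl =>
      intro p
      unfold stepT
      split_ifs
      · exact εClosure_stepSet _ _ _
      · exact εClosure_stepSet _ _ _
      · exact hT p
    have hfun : ∀ p, List.foldl (S p).aut.stepSet (stepT S T a p) (w.filterMap (projLabel p))
        = List.foldl (S p).aut.stepSet (T p) ((a :: w).filterMap (projLabel p)) := by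
      intro p
      unfold stepT
      by_cases hs : a.sender = p
      · rw [if_pos hs]
        have hpl : projLabel p a = some a.sendAct := by rw [projLabel, if_pos hs]
        rw [List.filterMap_cons, hpl, List.foldl_cons]
      · by_cases hr : a.receiver = p
        · rw [if_neg hs, if_pos hr]
          have hpl : projLabel p a = some a.recvAct := by rw [projLabel, if_neg hs, if_pos hr]
          rw [List.filterMap_cons, hpl, List.foldl_cons]
        · rw [if_neg hs, if_neg hr]
          have hpl : projLabel p a = none := by rw [projLabel, if_neg hs, if_neg hr]
          rw [List.filterMap_cons, hpl]
    ext st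
    exact forall_congr' fun p => by beta_reduce; rw [hfun p]

theorem syncProd_accepts [Fintype P] (w : List (Arrow P Mg)) :
    w ∈ (syncProd S).accepts ↔ ∀ p, (w.filterMap (projLabel p)) ∈ (S p).aut.accepts := by
  have hstart : (syncProd S).εClosure (syncProd S).start
      = PS S fun p => (S p).aut.εClosure (S p).aut.start := by
    have h0 : (syncProd S).start = PS S fun p => (S p).aut.start := rfl
    rw [h0, εClosure_PS]
  have heval : (syncProd S).eval w
      = PS S fun p => (S p).aut.evalFrom (S p).aut.start (w.filterMap (projLabel p)) := by
    show List.foldl _ _ _ = _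
    rw [hstart, foldl_stepSet_PS S w _ (fun p => εClosure_εClosure _ _)]
    rfl
  constructor
  · rintro ⟨st, hacc, hev⟩ p
    rw [heval] at hev
    exact ⟨st p, hacc p, hev p⟩
  · intro h
    choose st h1 h2 using h
    refine ⟨st, h1, ?_⟩
    rw [heval]
    exact h2

end Prod

/-! #### Global-type plumbing and the key equivalence -/

section GT

variable [DecidableEq P] [Fintype P]

theorem prodG_evalFrom (S : P → CFSM (Act P Mg)) (w : List (Arrow P Mg)) :
    ∀ t : (prodG S).State, (prodG S).evalFrom (some t) w
      = some (DFA.evalFrom ((syncProd S).toNFA.toDFA) t w) := by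
  induction w with
  | nil => intro t; rfl
  | cons a w ih =>
    intro t
    have h1 : (prodG S).evalFrom (some t) (a :: w)
        = (prodG S).evalFrom (some (((syncProd S).toNFA.toDFA).step t a)) w := rfl
    have h2 : DFA.evalFrom ((syncProd S).toNFA.toDFA) t (a :: w)
        = DFA.evalFrom ((syncProd S).toNFA.toDFA) (((syncProd S).toNFA.toDFA).step t a) w := rfl
    rw [h1, h2]
    exact ih _

theorem prodG_lang (S : P → CFSM (Act P Mg)) (w : List (Arrow P Mg)) :
    w ∈ (prodG S).lang ↔ w ∈ (syncProd S).accepts := by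
  have hstart : (prodG S).start = ((syncProd S).toNFA.toDFA).start := rfl
  have haccept : (prodG S).accept = {s | s ∈ ((syncProd S).toNFA.toDFA).accept} := rfl
  unfold GType.lang
  rw [Set.mem_setOf_eq, hstart]
  constructor
  · rintro ⟨s, hev, hacc⟩
    have hev' := (prodG_evalFrom S w ((syncProd S).toNFA.toDFA.start)).symm.trans hev
    replace hev' := Option.some.inj hev'
    subst hev'
    rw [← εNFA.toNFA_correct, ← NFA.toDFA_correct, DFA.mem_accepts]
    exact hacc
  · intro hacc
    rw [← εNFA.toNFA_correct, ← NFA.toDFA_correct, DFA.mem_accepts] at hacc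
    exact ⟨_, prodG_evalFrom S w _, hacc⟩

theorem dualG_evalFrom (H : GType P Mg) (w : List (Arrow P Mg)) :
    ∀ d : Option H.State, (dualG H).evalFrom (some d) w = some (H.evalFrom d w) := by
  induction w with
  | nil => intro d; rfl
  | cons a w ih =>
    intro d
    have h1 : (dualG H).evalFrom (some d) (a :: w)
        = (dualG H).evalFrom (some (d.bind fun q => H.step q a)) w := rfl
    have h2 : H.evalFrom d (a :: w) = H.evalFrom (d.bind fun q => H.step q a) w := rfl
    rw [h1, h2, ih]

theorem dualG_lang (H : GType P Mg) (w : List (Arrow P Mg)) :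
    w ∈ (dualG H).lang ↔ w ∉ H.lang := by
  unfold GType.lang
  have hstart : (dualG H).start = some H.start := rfl
  rw [Set.mem_setOf_eq, Set.mem_setOf_eq, hstart, dualG_evalFrom H w (some H.start)]
  constructor
  · rintro ⟨s, hs, hacc⟩ ⟨t, ht, htacc⟩
    replace hs := Option.some.inj hs
    exact hacc t (by rw [← hs, ht]) htacc
  · intro hn
    refine ⟨H.evalFrom (some H.start) w, rfl, ?_⟩
    intro q hq hqacc
    exact hn ⟨q, hq, hqacc⟩

theorem key (G : GType P Mg) (h : ExecSys (projG G) synch = ExecG G synch)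
    (w : List (Arrow P Mg)) :
    w ∈ (prodG (projG G)).lang ↔ mscOfArrows w ∈ Lexists G := by
  rw [prodG_lang, syncProd_accepts]
  have h1 : (∀ p, (w.filterMap (projLabel p)) ∈ ((projG G) p).aut.accepts)
      ↔ execOfArrows w ∈ ExecSys (projG G) synch := by
    constructor
    · intro hp
      exact ⟨execOfArrows_mem_synch w, fun p => by rw [proj_execOfArrows]; exact hp p⟩
    · rintro ⟨-, hp⟩ p
      have := hp p
      rwa [proj_execOfArrows] at this
  rw [h1, h]
  constructor
  · rintro ⟨Mm, hMm, hlin, -⟩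
    have hmsc : (execOfArrows w).toMSC = Mm := hlin.2
    rw [show mscOfArrows w = (execOfArrows w).toMSC from rfl, hmsc]
    exact hMm
  · intro hM
    exact ⟨mscOfArrows w, hM, ⟨(execOfArrows_mem_synch w).1, rfl⟩, execOfArrows_mem_synch w⟩

end GT

end Stmt11

/-- if `G` is deadlock-free realisable in `synch`, then
`dual(prod(proj(G)))` is a complement of `G`. -/
theorem stmt11 (P Mg : Type) [Fintype P] [DecidableEq P] [Fintype Mg] [DecidableEq Mg]
    (G : GType P Mg) (h : DFRealisable G synch) :
    Lexists G = MSCsynch P Mg \ Lexists (dualG (prodG (projG G))) := by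
  have hkey := Stmt11.key G h.1
  ext Mm
  constructor
  · rintro ⟨w, hw, rfl⟩
    refine ⟨⟨w, rfl⟩, ?_⟩
    rintro ⟨w', hw', hmsc⟩
    rw [Stmt11.dualG_lang] at hw'
    exact hw' ((hkey w').2 (by rw [hmsc]; exact ⟨w, hw, rfl⟩))
  · rintro ⟨⟨w, rfl⟩, hnot⟩
    have hw : w ∈ (prodG (projG G)).lang := by
      by_contra hc
      exact hnot ⟨w, (Stmt11.dualG_lang _ w).2 hc, rfl⟩
    exact (hkey w).1 hw
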